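/- arXiv:0706.0136 — 2 statements merged into one kernel-verified Lean document; each statement's English description precedes it below -/
import Mathlib

section
/- The Stieltjes transform $g_\sigma$ of the semicircle law of variance $\sigma^2$, restricted to $\mathbb{R} \setminus [-2\sigma, 2\sigma]$, is given explicitly by $g_\sigma(x) = \frac{x}{2\sigma^2}\left(1 - \sqrt{1 - \frac{4\sigma^2}{x^2}}\right)$ for all real $x$ with $|x| > 2\sigma$. -/
/-- Density of the semicircle distribution of variance `σ^2`. -/
noncomputable def scDensity (σ t : ℝ) : ℝ :=
  if t ∈ Set.Icc (-(2*σ)) (2*σ) then (2 * Real.pi * σ^2)⁻¹ * Real.sqrt (4*σ^2 - t^2) else 0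

/-- Stieltjes transform of the semicircle distribution of variance `σ^2`. -/
noncomputable def gSC (σ : ℝ) (z : ℂ) : ℂ := ∫ t : ℝ, (z - (t : ℂ))⁻¹ * (scDensity σ t : ℂ)

open Real MeasureTheory intervalIntegral Set


lemma key_integral (a x : ℝ) (ha : 0 < a) (hax : a < x) :
    (∫ t in (-a)..a, Real.sqrt (a^2 - t^2) / (x - t))
      = Real.pi * (x - Real.sqrt (x^2 - a^2)) := by
  set s := Real.sqrt (x^2 - a^2) with hs_def
  have hxa2 : 0 < x^2 - a^2 := by nlinarith
  have hs2 : s^2 = x^2 - a^2 := Real.sq_sqrt hxa2.le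
  have hspos : 0 < s := Real.sqrt_pos.mpr hxa2
  set F : ℝ → ℝ := fun t =>
    x * Real.arcsin (t/a) - Real.sqrt (a^2 - t^2)
      + s * Real.arcsin ((a^2 - x*t)/(a*(x-t))) with hF_def
  have hxt : ∀ t ∈ Set.Icc (-a) a, 0 < x - t := fun t ht => by
    rcases ht with ⟨h1, h2⟩; linarith
  have hder : ∀ t ∈ Set.Ioo (-a) a,
      HasDerivAt F (Real.sqrt (a^2 - t^2) / (x - t)) t := by
    intro t ht
    obtain ⟨ht1, ht2⟩ := ht
    have hxt' : 0 < x - t := by linarith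
    have hat2 : 0 < a^2 - t^2 := by nlinarith
    set d := Real.sqrt (a^2 - t^2) with hd_def
    have hd2 : d^2 = a^2 - t^2 := Real.sq_sqrt hat2.le
    have hdpos : 0 < d := Real.sqrt_pos.mpr hat2
    -- first term
    have h1 : HasDerivAt (fun t => x * Real.arcsin (t/a)) (x * (a / d * (1/a))) t := by
      have hta1 : t/a ≠ -1 := by
        intro h
        have : t = -a := by field_simp at h; linarith
        linarith
      have hta2 : t/a ≠ 1 := by
        intro h
        have : t = a := by field_simp at h; linarith
        linarith
      have := (Real.hasDerivAt_arcsin hta1 hta2).comp t ((hasDerivAt_id t).div_const a)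
      have hsq : Real.sqrt (1 - (t/a)^2) = d / a := by
        rw [show (1 : ℝ) - (t/a)^2 = (a^2 - t^2) / a^2 by field_simp,
          Real.sqrt_div hat2.le, Real.sqrt_sq ha.le]
      have h' : HasDerivAt (fun t => Real.arcsin (t/a)) (a / d * (1/a)) t := by
        refine this.congr_deriv ?_
        rw [hsq]
        field_simp
      exact h'.const_mul x
    -- second term
    have h2 : HasDerivAt (fun t => Real.sqrt (a^2 - t^2)) (-t / d) t := by
      have hinner : HasDerivAt (fun t : ℝ => a^2 - t^2) (-(2*t)) t := by
        simpa using ((hasDerivAt_pow 2 t).const_sub (a^2))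
      have := (Real.hasDerivAt_sqrt hat2.ne').comp t hinner
      refine this.congr_deriv ?_
      rw [← hd_def]
      field_simp
    -- third term
    set u := (a^2 - x*t)/(a*(x-t)) with hu_def
    have hden : a*(x-t) ≠ 0 := by positivity
    have h1u : 1 - u^2 = (a^2-t^2)*(x^2-a^2)/(a*(x-t))^2 := by
      rw [hu_def]; field_simp; ring
    have hu2 : u^2 < 1 := by
      have hpos : 0 < (a^2-t^2)*(x^2-a^2)/(a*(x-t))^2 := by positivity
      nlinarith
    have hu1 : u ≠ -1 := by intro h; rw [h] at hu2; norm_num at hu2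
    have hu1' : u ≠ 1 := by intro h; rw [h] at hu2; norm_num at hu2
    have husqrt : Real.sqrt (1 - u^2) = d * s / (a*(x-t)) := by
      rw [h1u, Real.sqrt_div (by positivity), Real.sqrt_mul hat2.le,
        Real.sqrt_sq (by positivity)]
    have hu' : HasDerivAt (fun t => (a^2 - x*t)/(a*(x-t)))
        (((-x) * (a*(x-t)) - (a^2 - x*t) * (-a)) / (a*(x-t))^2) t := by
      have hn : HasDerivAt (fun t : ℝ => a^2 - x*t) (-x) t := by
        simpa using ((hasDerivAt_id t).const_mul x).const_sub (a^2)
      have hm : HasDerivAt (fun t : ℝ => a*(x-t)) (-a) t := by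
        simpa using (((hasDerivAt_id t).const_sub x).const_mul a)
      exact hn.div hm hden
    have h3 : HasDerivAt (fun t => s * Real.arcsin ((a^2 - x*t)/(a*(x-t))))
        (s * (1 / (d * s / (a*(x-t))) *
          (((-x) * (a*(x-t)) - (a^2 - x*t) * (-a)) / (a*(x-t))^2))) t := by
      have := (Real.hasDerivAt_arcsin hu1 hu1').comp t hu'
      rw [husqrt] at this
      exact this.const_mul s
    have := (h1.sub h2).add h3
    refine this.congr_deriv ?_
    symm
    have has : a ≠ 0 := ha.ne'
    have hds : d ≠ 0 := hdpos.ne'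
    have hss : s ≠ 0 := hspos.ne'
    have hxts : x - t ≠ 0 := hxt'.ne'
    field_simp
    linear_combination hd2
  -- continuity of F on the closed interval
  have hcontF : ContinuousOn F (Set.Icc (-a) a) := by
    apply ContinuousOn.add
    · apply ContinuousOn.sub
      · exact (continuous_const.mul (Real.continuous_arcsin.comp
          (continuous_id.div_const a))).continuousOn
      · exact (Real.continuous_sqrt.comp (continuous_const.sub (continuous_pow 2))).continuousOn
    · apply ContinuousOn.mul continuousOn_const
      apply Real.continuous_arcsin.comp_continuousOn
      apply ContinuousOn.div
      · exact (continuous_const.sub (continuous_const.mul continuous_id)).continuousOn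
      · exact (continuous_const.mul (continuous_const.sub continuous_id)).continuousOn
      · intro t ht
        have := hxt t ht
        positivity
  -- integrability of the integrand
  have hcont_f : ContinuousOn (fun t => Real.sqrt (a^2 - t^2) / (x - t))
      (Set.uIcc (-a) a) := by
    rw [Set.uIcc_of_le (by linarith)]
    apply ContinuousOn.div
    · exact (Real.continuous_sqrt.comp (continuous_const.sub (continuous_pow 2))).continuousOn
    · exact (continuous_const.sub continuous_id).continuousOn
    · intro t ht; exact (hxt t ht).ne'
  have hint : IntervalIntegrable (fun t => Real.sqrt (a^2 - t^2) / (x - t))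
      volume (-a) a := hcont_f.intervalIntegrable
  have heq := intervalIntegral.integral_eq_sub_of_hasDeriv_right_of_le (by linarith)
    hcontF (fun t ht => (hder t ht).hasDerivWithinAt) hint
  rw [heq]
  -- evaluate the endpoints
  have haa : a / a = 1 := div_self ha.ne'
  have hFa : F a = x * (Real.pi/2) + s * (-(Real.pi/2)) := by
    have h1 : (a^2 - x*a)/(a*(x-a)) = -1 := by
      rw [div_eq_iff (by nlinarith : a*(x-a) ≠ 0)]; ring
    simp only [hF_def, haa, h1, Real.arcsin_one, Real.arcsin_neg_one]
    rw [show a^2 - a^2 = 0 by ring, Real.sqrt_zero]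
    ring
  have hFma : F (-a) = x * (-(Real.pi/2)) + s * (Real.pi/2) := by
    have h1 : (a^2 - x*(-a))/(a*(x-(-a))) = 1 := by
      rw [div_eq_iff (by nlinarith : a*(x-(-a)) ≠ 0)]; ring
    have h2 : (-a)/a = -1 := by rw [neg_div, haa]
    simp only [hF_def, h1, h2, Real.arcsin_one, Real.arcsin_neg_one]
    rw [show a^2 - (-a)^2 = 0 by ring, Real.sqrt_zero]
    ring
  rw [hFa, hFma]
  ring

lemma realJ_pos (σ x : ℝ) (hσ : 0 < σ) (hx : 2*σ < x) :
    (∫ t : ℝ, (x - t)⁻¹ * scDensity σ t)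
      = x / (2 * σ^2) * (1 - Real.sqrt (1 - 4 * σ^2 / x^2)) := by
  have ha : 0 < 2*σ := by linarith
  have hxpos : 0 < x := by linarith
  have heq : (fun t : ℝ => (x - t)⁻¹ * scDensity σ t)
      = Set.indicator (Set.Icc (-(2*σ)) (2*σ))
          (fun t => (x - t)⁻¹ * ((2 * Real.pi * σ^2)⁻¹ * Real.sqrt (4*σ^2 - t^2))) := by
    funext t
    by_cases h : t ∈ Set.Icc (-(2*σ)) (2*σ)
    · rw [Set.indicator_of_mem h, scDensity, if_pos h]
    · rw [Set.indicator_of_notMem h, scDensity, if_neg h, mul_zero]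
  rw [heq, MeasureTheory.integral_indicator measurableSet_Icc,
    MeasureTheory.integral_Icc_eq_integral_Ioc,
    ← intervalIntegral.integral_of_le (by linarith : -(2*σ) ≤ 2*σ)]
  have h2 : ∀ t : ℝ, (x - t)⁻¹ * ((2 * Real.pi * σ^2)⁻¹ * Real.sqrt (4*σ^2 - t^2))
      = (2 * Real.pi * σ^2)⁻¹ * (Real.sqrt ((2*σ)^2 - t^2) / (x - t)) := by
    intro t
    rw [show (2*σ)^2 = 4*σ^2 by ring]
    rw [div_eq_inv_mul]
    ring
  simp_rw [h2]
  rw [intervalIntegral.integral_const_mul, key_integral (2*σ) x ha hx]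
  have hπ : Real.pi ≠ 0 := Real.pi_ne_zero
  have hsq : Real.sqrt (1 - 4*σ^2/x^2) = Real.sqrt (x^2 - (2*σ)^2) / x := by
    rw [show (1 : ℝ) - 4*σ^2/x^2 = (x^2 - (2*σ)^2) / x^2 by field_simp; ring,
      Real.sqrt_div (by nlinarith) , Real.sqrt_sq hxpos.le]
  rw [hsq]
  field_simp
lemma scDensity_even (σ t : ℝ) : scDensity σ (-t) = scDensity σ t := by
  unfold scDensity
  have hiff : (-t ∈ Set.Icc (-(2*σ)) (2*σ)) ↔ (t ∈ Set.Icc (-(2*σ)) (2*σ)) := by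
    simp only [Set.mem_Icc]
    constructor <;> intro h <;> constructor <;> linarith [h.1, h.2]
  simp only [neg_sq, hiff]

lemma realJ_neg (σ x : ℝ) (hσ : 0 < σ) (hx : x < -(2*σ)) :
    (∫ t : ℝ, (x - t)⁻¹ * scDensity σ t)
      = x / (2 * σ^2) * (1 - Real.sqrt (1 - 4 * σ^2 / x^2)) := by
  have h1 : (∫ t : ℝ, (x - t)⁻¹ * scDensity σ t)
      = ∫ t : ℝ, (x - (-t))⁻¹ * scDensity σ (-t) :=
    (MeasureTheory.integral_neg_eq_self (fun t : ℝ => (x - t)⁻¹ * scDensity σ t) volume).symm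
  have h2 : ∀ t : ℝ, (x - (-t))⁻¹ * scDensity σ (-t)
      = -(((-x) - t)⁻¹ * scDensity σ t) := by
    intro t
    rw [scDensity_even, show x - (-t) = -((-x) - t) by ring, inv_neg]
    ring
  rw [h1]
  simp_rw [h2]
  rw [MeasureTheory.integral_neg, realJ_pos σ (-x) hσ (by linarith)]
  rw [show (-x)^2 = x^2 by ring]
  ring

theorem gSC_explicit_on_real' (σ : ℝ) (hσ : 0 < σ) (x : ℝ) (hx : 2 * σ < |x|) :
    (∫ t : ℝ, ((x:ℂ) - (t : ℂ))⁻¹ * (scDensity σ t : ℂ))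
      = ((x / (2 * σ^2) * (1 - Real.sqrt (1 - 4 * σ^2 / x^2)) : ℝ) : ℂ) := by
  have hre : (∫ t : ℝ, ((x:ℂ) - (t : ℂ))⁻¹ * (scDensity σ t : ℂ))
      = ((∫ t : ℝ, (x - t)⁻¹ * scDensity σ t : ℝ) : ℂ) := by
    have hpt : ∀ t : ℝ, ((x:ℂ) - (t:ℂ))⁻¹ * (scDensity σ t : ℂ)
        = (((x - t)⁻¹ * scDensity σ t : ℝ) : ℂ) := by
      intro t; push_cast; ring
    simp_rw [hpt]
    exact _root_.integral_ofReal
  rw [hre]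
  norm_cast
  rcases abs_cases x with ⟨h1, _⟩ | ⟨h1, _⟩
  · exact realJ_pos σ x hσ (h1 ▸ hx)
  · exact realJ_neg σ x hσ (by rw [h1] at hx; linarith)

theorem gSC_explicit_on_real (σ : ℝ) (hσ : 0 < σ) (x : ℝ) (hx : 2 * σ < |x|) :
    gSC σ (x : ℂ) = ((x / (2 * σ^2) * (1 - Real.sqrt (1 - 4 * σ^2 / x^2)) : ℝ) : ℂ) := by
  rw [gSC]
  exact gSC_explicit_on_real' σ hσ x hx
end

section
/- Let $s$ be a random variable with the semicircle distribution of variance $\sigma^2$, and let $\theta > \sigma$. Then the Stieltjes transform of the semicircle law evaluated at $\rho_\theta = \theta + \sigma^2/\theta$ satisfies $\mathbb{E}\left[ \frac{1}{(\rho_\theta - s)^2} \right] = \frac{1}{\theta^2 - \sigma^2}$. -/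
open Real Filter MeasureTheory Set intervalIntegral Topology

lemma sc_aux (a ρ : ℝ) (ha : 0 < a) (hρ : a < ρ) :
    ∫ t in (-a)..a, ((ρ - t)^2)⁻¹ * Real.sqrt (a^2 - t^2)
      = Real.pi * (ρ / Real.sqrt (ρ^2 - a^2) - 1) := by
  set s : ℝ := Real.sqrt (ρ^2 - a^2) with hs_def
  have hs2 : s^2 = ρ^2 - a^2 := Real.sq_sqrt (by nlinarith)
  have hs0 : 0 < s := Real.sqrt_pos.mpr (by nlinarith)
  set F : ℝ → ℝ := fun t => -Real.arcsin (t/a)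
      - (ρ/s) * Real.arctan ((a^2 - ρ*t)/(s * Real.sqrt (a^2 - t^2)))
      + Real.sqrt (a^2 - t^2)/(ρ - t) with hF_def
  have hab : -a < a := by linarith
  have hderiv : ∀ t ∈ Set.Ioo (-a) a,
      HasDerivAt F (((ρ - t)^2)⁻¹ * Real.sqrt (a^2 - t^2)) t := by
    intro t ht
    obtain ⟨ht1, ht2⟩ := ht
    have hq0' : 0 < a^2 - t^2 := by nlinarith
    set q : ℝ := Real.sqrt (a^2 - t^2) with hq_def
    have hq0 : 0 < q := Real.sqrt_pos.mpr hq0'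
    have hq2 : q^2 = a^2 - t^2 := Real.sq_sqrt hq0'.le
    have hρt : 0 < ρ - t := by linarith
    -- arcsin part
    have hsq1 : Real.sqrt (1 - (t/a)^2) = q / a := by
      rw [show 1 - (t/a)^2 = (a^2 - t^2)/a^2 by field_simp]
      rw [Real.sqrt_div hq0'.le, Real.sqrt_sq ha.le]
    have hA1 : HasDerivAt (fun x => Real.arcsin (x/a)) (1/q) t := by
      have h1 : t/a ≠ -1 := by
        intro h
        have : t = -a := by field_simp at h; linarith
        linarith
      have h2 : t/a ≠ 1 := by
        intro h
        have : t = a := by field_simp at h; linarith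
        linarith
      have := (Real.hasDerivAt_arcsin h1 h2).comp t ((hasDerivAt_id t).div_const a)
      refine this.congr_deriv (Eq.symm ?_)
      rw [hsq1]
      field_simp
    -- sqrt part
    have hSq : HasDerivAt (fun x => Real.sqrt (a^2 - x^2)) (-t/q) t := by
      have hin : HasDerivAt (fun x : ℝ => a^2 - x^2) (-(2*t)) t := by
        simpa using ((hasDerivAt_pow 2 t).const_sub (a^2))
      have := (Real.hasDerivAt_sqrt (ne_of_gt hq0')).comp t hin
      refine this.congr_deriv (Eq.symm ?_)
      field_simp
      ring
    -- arctan part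
    have key : s^2 * q^2 + (a^2 - ρ*t)^2 = a^2 * (ρ-t)^2 := by
      linear_combination q^2 * hs2 + (ρ^2 - a^2) * hq2
    have hA2 : HasDerivAt
        (fun x => Real.arctan ((a^2 - ρ*x)/(s * Real.sqrt (a^2 - x^2))))
        (-s/((ρ-t)*q)) t := by
      have hnum : HasDerivAt (fun x : ℝ => a^2 - ρ*x) (-ρ) t := by
        simpa using ((hasDerivAt_id t).const_mul ρ).const_sub (a^2)
      have hden : HasDerivAt (fun x => s * Real.sqrt (a^2 - x^2)) (s * (-t/q)) t :=
        hSq.const_mul s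
      have hdne : s * q ≠ 0 := (mul_pos hs0 hq0).ne'
      have hw := hnum.div hden hdne
      have := (Real.hasDerivAt_arctan ((a^2 - ρ*t)/(s * q))).comp t hw
      refine this.congr_deriv (Eq.symm ?_)
      field_simp
      linear_combination q^2*(a^2-ρ*t)*hq2 - q^4*hs2
    -- last part
    have hA3 : HasDerivAt (fun x => Real.sqrt (a^2 - x^2)/(ρ - x))
        ((a^2 - ρ*t)/(q * (ρ-t)^2)) t := by
      have hden : HasDerivAt (fun x : ℝ => ρ - x) (-1) t := by
        simpa using ((hasDerivAt_id t).const_sub ρ)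
      have := hSq.div hden (by linarith : ρ - t ≠ 0)
      refine this.congr_deriv (Eq.symm ?_)
      field_simp
      linear_combination -hq2
    have := ((hA1.neg).sub (hA2.const_mul (ρ/s))).add hA3
    refine this.congr_deriv (Eq.symm ?_)
    field_simp
    linear_combination hq2
  have hint : IntervalIntegrable (fun t => ((ρ - t)^2)⁻¹ * Real.sqrt (a^2 - t^2))
      volume (-a) a := by
    apply ContinuousOn.intervalIntegrable
    apply ContinuousOn.mul
    · apply ContinuousOn.inv₀
      · fun_prop
      · intro t ht
        rw [Set.uIcc_of_le hab.le] at ht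
        have : t < ρ := lt_of_le_of_lt ht.2 hρ
        exact pow_ne_zero 2 (by linarith)
    · fun_prop
  -- limits at endpoints
  have harcsin_cont : Continuous fun x : ℝ => Real.arcsin (x/a) :=
    Real.continuous_arcsin.comp (continuous_id.div_const a)
  have hsqrt_cont : Continuous fun x : ℝ => Real.sqrt (a^2 - x^2) := by fun_prop
  have hρa : ρ - a ≠ 0 := by linarith
  have hρa' : ρ + a ≠ 0 := by nlinarith
  -- limit at the right endpoint a
  have hmem_b : Set.Ioo (-a) a ∈ 𝓝[<] a := Ioo_mem_nhdsLT_of_mem ⟨hab, le_refl a⟩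
  have tend_sq_b : Tendsto (fun x => Real.sqrt (a^2 - x^2)) (𝓝[<] a) (𝓝 0) := by
    have := (hsqrt_cont.tendsto a).mono_left (nhdsWithin_le_nhds (s := Set.Iio a))
    simpa using this
  have tend_inv_b : Tendsto (fun x => (s * Real.sqrt (a^2 - x^2))⁻¹) (𝓝[<] a) atTop := by
    apply tendsto_inv_nhdsGT_zero.comp
    apply tendsto_nhdsWithin_of_tendsto_nhds_of_eventually_within
    · simpa using tend_sq_b.const_mul s
    · filter_upwards [hmem_b] with x hx
      have : 0 < Real.sqrt (a^2 - x^2) := Real.sqrt_pos.mpr (by nlinarith [hx.1, hx.2])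
      exact Set.mem_Ioi.mpr (by positivity)
  have tend_num_b : Tendsto (fun x : ℝ => a^2 - ρ*x) (𝓝[<] a) (𝓝 (a^2 - ρ*a)) := by
    have h : Tendsto (fun x : ℝ => a^2 - ρ*x) (𝓝 a) (𝓝 (a^2 - ρ*a)) :=
      Continuous.tendsto (by fun_prop) a
    exact h.mono_left nhdsWithin_le_nhds
  have harg_b : Tendsto (fun x => (a^2 - ρ*x)/(s * Real.sqrt (a^2 - x^2)))
      (𝓝[<] a) atBot := by
    simp only [div_eq_mul_inv]
    exact tend_num_b.neg_mul_atTop (by nlinarith : a^2 - ρ*a < 0) tend_inv_b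
  have t2b : Tendsto (fun x => Real.arctan ((a^2 - ρ*x)/(s * Real.sqrt (a^2 - x^2))))
      (𝓝[<] a) (𝓝 (-(Real.pi/2))) :=
    (Real.tendsto_arctan_atBot.mono_right nhdsWithin_le_nhds).comp harg_b
  have t1b : Tendsto (fun x => Real.arcsin (x/a)) (𝓝[<] a) (𝓝 (Real.pi/2)) := by
    have := (harcsin_cont.tendsto a).mono_left (nhdsWithin_le_nhds (s := Set.Iio a))
    simpa [div_self ha.ne'] using this
  have t3b : Tendsto (fun x => Real.sqrt (a^2 - x^2)/(ρ - x)) (𝓝[<] a) (𝓝 0) := by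
    have hden_b : Tendsto (fun x : ℝ => ρ - x) (𝓝[<] a) (𝓝 (ρ - a)) := by
      have h : Tendsto (fun x : ℝ => ρ - x) (𝓝 a) (𝓝 (ρ - a)) :=
        Continuous.tendsto (by fun_prop) a
      exact h.mono_left nhdsWithin_le_nhds
    have := tend_sq_b.div hden_b hρa; rw [zero_div] at this; exact this
  have hbLim : Tendsto F (𝓝[<] a)
      (𝓝 (-(Real.pi/2) - (ρ/s) * (-(Real.pi/2)) + 0)) :=
    ((t1b.neg).sub (t2b.const_mul (ρ/s))).add t3b
  -- limit at the left endpoint -a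
  have hmem_a : Set.Ioo (-a) a ∈ 𝓝[>] (-a) := Ioo_mem_nhdsGT_of_mem ⟨le_refl _, hab⟩
  have tend_sq_a : Tendsto (fun x => Real.sqrt (a^2 - x^2)) (𝓝[>] (-a)) (𝓝 0) := by
    have := (hsqrt_cont.tendsto (-a)).mono_left (nhdsWithin_le_nhds (s := Set.Ioi (-a)))
    simpa using this
  have tend_inv_a : Tendsto (fun x => (s * Real.sqrt (a^2 - x^2))⁻¹) (𝓝[>] (-a)) atTop := by
    apply tendsto_inv_nhdsGT_zero.comp
    apply tendsto_nhdsWithin_of_tendsto_nhds_of_eventually_within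
    · simpa using tend_sq_a.const_mul s
    · filter_upwards [hmem_a] with x hx
      have : 0 < Real.sqrt (a^2 - x^2) := Real.sqrt_pos.mpr (by nlinarith [hx.1, hx.2])
      exact Set.mem_Ioi.mpr (by positivity)
  have tend_num_a : Tendsto (fun x : ℝ => a^2 - ρ*x) (𝓝[>] (-a)) (𝓝 (a^2 + ρ*a)) := by
    have h : Tendsto (fun x : ℝ => a^2 - ρ*x) (𝓝 (-a)) (𝓝 (a^2 - ρ*(-a))) :=
      Continuous.tendsto (by fun_prop) (-a)
    have h2 := h.mono_left (nhdsWithin_le_nhds (s := Set.Ioi (-a)))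
    simpa [mul_neg, sub_neg_eq_add] using h2
  have harg_a : Tendsto (fun x => (a^2 - ρ*x)/(s * Real.sqrt (a^2 - x^2)))
      (𝓝[>] (-a)) atTop := by
    simp only [div_eq_mul_inv]
    exact tend_num_a.pos_mul_atTop (by nlinarith : (0:ℝ) < a^2 + ρ*a) tend_inv_a
  have t2a : Tendsto (fun x => Real.arctan ((a^2 - ρ*x)/(s * Real.sqrt (a^2 - x^2))))
      (𝓝[>] (-a)) (𝓝 (Real.pi/2)) :=
    (Real.tendsto_arctan_atTop.mono_right nhdsWithin_le_nhds).comp harg_a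
  have t1a : Tendsto (fun x => Real.arcsin (x/a)) (𝓝[>] (-a)) (𝓝 (-(Real.pi/2))) := by
    have := (harcsin_cont.tendsto (-a)).mono_left (nhdsWithin_le_nhds (s := Set.Ioi (-a)))
    simpa [neg_div, div_self ha.ne', Real.arcsin_neg] using this
  have t3a : Tendsto (fun x => Real.sqrt (a^2 - x^2)/(ρ - x)) (𝓝[>] (-a)) (𝓝 0) := by
    have hden_a : Tendsto (fun x : ℝ => ρ - x) (𝓝[>] (-a)) (𝓝 (ρ + a)) := by
      have h : Tendsto (fun x : ℝ => ρ - x) (𝓝 (-a)) (𝓝 (ρ - (-a))) :=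
        Continuous.tendsto (by fun_prop) (-a)
      simpa [sub_neg_eq_add] using h.mono_left nhdsWithin_le_nhds
    have := tend_sq_a.div hden_a hρa'; rw [zero_div] at this; exact this
  have haLim : Tendsto F (𝓝[>] (-a))
      (𝓝 (-(-(Real.pi/2)) - (ρ/s) * (Real.pi/2) + 0)) :=
    ((t1a.neg).sub (t2a.const_mul (ρ/s))).add t3a
  rw [intervalIntegral.integral_eq_sub_of_hasDerivAt_of_tendsto hab hderiv hint haLim hbLim]
  ring

theorem semicircle_second_moment_at_rho (σ θ : ℝ) (hσ : 0 < σ) (hθ : σ < θ) :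
    ∫ t : ℝ, (((θ + σ^2 / θ) - t)^2)⁻¹ * scDensity σ t = (θ^2 - σ^2)⁻¹ := by
  have hθ0 : 0 < θ := lt_trans hσ hθ
  have hθσ2 : σ^2 < θ^2 := by nlinarith
  have hρ : 2*σ < θ + σ^2/θ := by
    rw [show θ + σ^2/θ = (θ^2 + σ^2)/θ by field_simp, lt_div_iff₀ hθ0]
    nlinarith [sq_nonneg (θ - σ)]
  have hts0 : 0 < θ - σ^2/θ := by
    rw [show θ - σ^2/θ = (θ^2 - σ^2)/θ by field_simp]
    exact div_pos (by nlinarith) hθ0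
  have hsqrt : Real.sqrt ((θ + σ^2/θ)^2 - (2*σ)^2) = θ - σ^2/θ := by
    rw [show (θ + σ^2/θ)^2 - (2*σ)^2 = (θ - σ^2/θ)^2 by field_simp; ring,
      Real.sqrt_sq hts0.le]
  have hrw : ∀ t : ℝ, (((θ + σ^2/θ) - t)^2)⁻¹ * scDensity σ t
      = Set.indicator (Set.Icc (-(2*σ)) (2*σ))
          (fun t => (2*Real.pi*σ^2)⁻¹
            * ((((θ + σ^2/θ) - t)^2)⁻¹ * Real.sqrt ((2*σ)^2 - t^2))) t := by
    intro t
    rw [Set.indicator_apply, scDensity]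
    split_ifs with h
    · rw [show (4:ℝ)*σ^2 = (2*σ)^2 by ring]; ring
    · simp
  simp only [hrw]
  rw [MeasureTheory.integral_indicator measurableSet_Icc,
    MeasureTheory.integral_Icc_eq_integral_Ioc,
    ← intervalIntegral.integral_of_le (by linarith : -(2*σ) ≤ 2*σ),
    intervalIntegral.integral_const_mul,
    sc_aux (2*σ) (θ + σ^2/θ) (by positivity) hρ, hsqrt]
  have hπ : Real.pi ≠ 0 := Real.pi_pos.ne'
  have h1 : θ - σ^2/θ ≠ 0 := hts0.ne'
  have h2 : θ^2 - σ^2 ≠ 0 := by nlinarith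
  have hi : (θ^2 - σ^2) * (θ^2 - σ^2)⁻¹ = 1 := mul_inv_cancel₀ h2
  field_simp
  ring
end
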